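/- For the unit sphere S^n ⊂ R^{n+1} with the angular metric ∢(x,y) = arccos⟨x,y⟩ and p ≥ 1, the diameter of the p-Wasserstein space W_p(S^n) equals π, and W_p(μ,ν) = π holds if and only if μ = δ_x and ν = δ_{-x} for some x ∈ S^n. -/

import Mathlib

open MeasureTheory Filter

/-- The `p`-Wasserstein distance with cost function `c` (the distance of the
underlying space): infimum over couplings of `∫ c(x,y)^p dπ`, to the power `1/p`. -/
noncomputable def wassersteinDist {X : Type*} [MeasurableSpace X]
    (c : X → X → ℝ) (p : ℝ) (μ ν : Measure X) : ℝ :=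
  sInf {r : ℝ | ∃ π : Measure (X × X), IsProbabilityMeasure π ∧
      π.map Prod.fst = μ ∧ π.map Prod.snd = ν ∧
      r = ∫ q, c q.1 q.2 ^ p ∂π} ^ (1 / p)

/-- The unit sphere of `ℝ^{n+1}`. -/
abbrev Sph (n : ℕ) := Metric.sphere (0 : EuclideanSpace ℝ (Fin (n + 1))) 1

/-- The angular (geodesic) distance on the sphere: `∢(x,y) = arccos ⟨x,y⟩`. -/
noncomputable def sphAngle {n : ℕ} (x y : Sph n) : ℝ :=
  Real.arccos (inner ℝ (x : EuclideanSpace ℝ (Fin (n + 1))) (y : EuclideanSpace ℝ (Fin (n + 1))))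

section Aux

open RealInnerProductSpace

variable {n : ℕ}

lemma sphAngle_nonneg (x y : Sph n) : 0 ≤ sphAngle x y := Real.arccos_nonneg _

lemma sphAngle_le_pi (x y : Sph n) : sphAngle x y ≤ Real.pi := Real.arccos_le_pi _

lemma sphAngle_eq_pi_iff {x y : Sph n} : sphAngle x y = Real.pi ↔ y = -x := by
  have hx : ‖(x : EuclideanSpace ℝ (Fin (n + 1)))‖ = 1 := norm_eq_of_mem_sphere x
  have hy : ‖(y : EuclideanSpace ℝ (Fin (n + 1)))‖ = 1 := norm_eq_of_mem_sphere y
  rw [sphAngle, Real.arccos_eq_pi]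
  constructor
  · intro h
    have habs : |⟪(x : EuclideanSpace ℝ (Fin (n + 1))), (y : EuclideanSpace ℝ (Fin (n + 1)))⟫| ≤ 1 := by
      simpa only [hx, hy, one_mul] using
        abs_real_inner_le_norm (x : EuclideanSpace ℝ (Fin (n + 1))) (y : EuclideanSpace ℝ (Fin (n + 1)))
    have h1 : ⟪(x : EuclideanSpace ℝ (Fin (n + 1))), (y : EuclideanSpace ℝ (Fin (n + 1)))⟫ = (-1 : ℝ) :=
      le_antisymm h (neg_le_of_abs_le habs)
    have h2 : ⟪(x : EuclideanSpace ℝ (Fin (n + 1))), -(y : EuclideanSpace ℝ (Fin (n + 1)))⟫ = (1 : ℝ) := by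
      rw [inner_neg_right, h1]; ring
    have h3 : (x : EuclideanSpace ℝ (Fin (n + 1))) = -(y : EuclideanSpace ℝ (Fin (n + 1))) :=
      (inner_eq_one_iff_of_norm_eq_one hx (by rw [norm_neg, hy])).1 h2
    ext1
    rw [coe_neg_sphere, h3, neg_neg]
  · rintro rfl
    rw [coe_neg_sphere, inner_neg_right, real_inner_self_eq_norm_sq, hx]
    norm_num

lemma continuous_sphAngle_rpow (p : ℝ) (hp0 : 0 ≤ p) :
    Continuous (fun q : Sph n × Sph n => sphAngle q.1 q.2 ^ p) := by
  have h1 : Continuous fun q : Sph n × Sph n =>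
      ⟪((q.1 : EuclideanSpace ℝ (Fin (n + 1)))), ((q.2 : EuclideanSpace ℝ (Fin (n + 1))))⟫ :=
    (continuous_subtype_val.comp continuous_fst).inner (continuous_subtype_val.comp continuous_snd)
  exact (Real.continuous_arccos.comp h1).rpow_const (fun q => Or.inr hp0)

lemma integrable_sphAngle_rpow {p : ℝ} (hp0 : 0 ≤ p) (π' : Measure (Sph n × Sph n))
    [IsProbabilityMeasure π'] : Integrable (fun q => sphAngle q.1 q.2 ^ p) π' := by
  refine Integrable.mono' (integrable_const (Real.pi ^ p))
    (continuous_sphAngle_rpow p hp0).aestronglyMeasurable ?_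
  filter_upwards with q
  rw [Real.norm_eq_abs, abs_of_nonneg (Real.rpow_nonneg (sphAngle_nonneg _ _) p)]
  exact Real.rpow_le_rpow (sphAngle_nonneg _ _) (sphAngle_le_pi _ _) hp0

lemma continuous_neg_sph : Continuous (fun x : Sph n => -x) := continuous_neg

lemma eq_dirac_of_compl {α : Type*} [MeasurableSpace α] [MeasurableSingletonClass α]
    {ν : Measure α} [IsProbabilityMeasure ν] {a : α} (h : ν {a}ᶜ = 0) :
    ν = Measure.dirac a := by
  ext s hs
  rw [Measure.dirac_apply' _ hs]
  by_cases ha : a ∈ s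
  · have hsc : ν sᶜ = 0 :=
      measure_mono_null (Set.compl_subset_compl.2 (Set.singleton_subset_iff.2 ha)) h
    have h1 : ν s = 1 := (prob_compl_eq_zero_iff hs).1 hsc
    simp [h1, Set.indicator_of_mem ha]
  · have hsub : s ⊆ {a}ᶜ := fun y hy hya => ha (Set.mem_singleton_iff.1 hya ▸ hy)
    have h0 : ν s = 0 := measure_mono_null hsub h
    simp [h0, Set.indicator_of_notMem ha]

/-- The set of attainable coupling costs, matching the set in `wassersteinDist`. -/
def cplSet (p : ℝ) (μ ν : Measure (Sph n)) : Set ℝ :=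
  {r : ℝ | ∃ π : Measure (Sph n × Sph n), IsProbabilityMeasure π ∧
      π.map Prod.fst = μ ∧ π.map Prod.snd = ν ∧
      r = ∫ q, sphAngle q.1 q.2 ^ p ∂π}

lemma wassersteinDist_eq (p : ℝ) (μ ν : Measure (Sph n)) :
    wassersteinDist sphAngle p μ ν = sInf (cplSet p μ ν) ^ (1 / p) := rfl

lemma cplSet_nonneg {p : ℝ} {μ ν : Measure (Sph n)} {r : ℝ} (hr : r ∈ cplSet p μ ν) : 0 ≤ r := by
  obtain ⟨π', hπ', -, -, rfl⟩ := hr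
  exact integral_nonneg fun q => Real.rpow_nonneg (sphAngle_nonneg _ _) p

lemma cplSet_le {p : ℝ} (hp0 : 0 ≤ p) {μ ν : Measure (Sph n)} {r : ℝ}
    (hr : r ∈ cplSet p μ ν) : r ≤ Real.pi ^ p := by
  obtain ⟨π', hπ', -, -, rfl⟩ := hr
  calc ∫ q, sphAngle q.1 q.2 ^ p ∂π' ≤ ∫ _, Real.pi ^ p ∂π' := by
        refine integral_mono (integrable_sphAngle_rpow hp0 π') (integrable_const _) fun q => ?_
        exact Real.rpow_le_rpow (sphAngle_nonneg _ _) (sphAngle_le_pi _ _) hp0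
    _ = Real.pi ^ p := by simp

lemma cplSet_prod_mem {p : ℝ} {μ ν : Measure (Sph n)} (hμ : IsProbabilityMeasure μ)
    (hν : IsProbabilityMeasure ν) :
    (∫ q, sphAngle q.1 q.2 ^ p ∂(μ.prod ν)) ∈ cplSet p μ ν :=
  ⟨μ.prod ν, inferInstance, by simp, by simp, rfl⟩

lemma cplSet_dirac {p : ℝ} (hp0 : 0 ≤ p) (x : Sph n) :
    cplSet p (Measure.dirac x) (Measure.dirac (-x)) = {Real.pi ^ p} := by
  have hpix : sphAngle x (-x) = Real.pi := sphAngle_eq_pi_iff.2 rfl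
  ext r
  simp only [Set.mem_singleton_iff]
  constructor
  · rintro ⟨π', hπ', h1, h2, rfl⟩
    have hae1 : ∀ᵐ q ∂π', q.1 = x := by
      have h : ∀ᵐ a ∂(π'.map Prod.fst), a = x := by
        rw [h1, ae_dirac_iff] <;> simp
      exact (ae_map_iff measurable_fst.aemeasurable (by simp)).1 h
    have hae2 : ∀ᵐ q ∂π', q.2 = -x := by
      have h : ∀ᵐ a ∂(π'.map Prod.snd), a = -x := by
        rw [h2, ae_dirac_iff] <;> simp
      exact (ae_map_iff measurable_snd.aemeasurable (by simp)).1 h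
    have hconst : (fun q : Sph n × Sph n => sphAngle q.1 q.2 ^ p) =ᵐ[π'] fun _ => Real.pi ^ p := by
      filter_upwards [hae1, hae2] with q hq1 hq2
      rw [hq1, hq2, hpix]
    rw [integral_congr_ae hconst]
    simp
  · rintro rfl
    refine ⟨Measure.dirac (x, -x), inferInstance, ?_, ?_, ?_⟩
    · rw [Measure.map_dirac' measurable_fst]
    · rw [Measure.map_dirac' measurable_snd]
    · rw [integral_dirac, hpix]

lemma pi_rpow_inv {p : ℝ} (hp : 1 ≤ p) : (Real.pi ^ p) ^ (1 / p) = Real.pi := by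
  rw [← Real.rpow_mul Real.pi_pos.le, mul_one_div_cancel (by linarith), Real.rpow_one]

lemma wassersteinDist_dirac {p : ℝ} (hp : 1 ≤ p) (x : Sph n) :
    wassersteinDist sphAngle p (Measure.dirac x) (Measure.dirac (-x)) = Real.pi := by
  rw [wassersteinDist_eq, cplSet_dirac (by linarith) x, csInf_singleton, pi_rpow_inv hp]

lemma sInf_cplSet_nonneg {p : ℝ} {μ ν : Measure (Sph n)} (hμ : IsProbabilityMeasure μ)
    (hν : IsProbabilityMeasure ν) : 0 ≤ sInf (cplSet p μ ν) :=
  le_csInf ⟨_, cplSet_prod_mem hμ hν⟩ fun _ hr => cplSet_nonneg hr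

lemma sInf_cplSet_le {p : ℝ} (hp0 : 0 ≤ p) {μ ν : Measure (Sph n)} (hμ : IsProbabilityMeasure μ)
    (hν : IsProbabilityMeasure ν) : sInf (cplSet p μ ν) ≤ Real.pi ^ p :=
  csInf_le_of_le ⟨0, fun _ hr => cplSet_nonneg hr⟩ (cplSet_prod_mem hμ hν)
    (cplSet_le hp0 (cplSet_prod_mem hμ hν))

lemma wassersteinDist_le_pi {p : ℝ} (hp : 1 ≤ p) {μ ν : Measure (Sph n)}
    (hμ : IsProbabilityMeasure μ) (hν : IsProbabilityMeasure ν) :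
    wassersteinDist sphAngle p μ ν ≤ Real.pi := by
  rw [wassersteinDist_eq]
  calc sInf (cplSet p μ ν) ^ (1 / p) ≤ (Real.pi ^ p) ^ (1 / p) :=
        Real.rpow_le_rpow (sInf_cplSet_nonneg hμ hν) (sInf_cplSet_le (by linarith) hμ hν)
          (by positivity)
    _ = Real.pi := pi_rpow_inv hp

lemma dirac_of_wasserstein_eq_pi {p : ℝ} (hp : 1 ≤ p) {μ ν : Measure (Sph n)}
    (hμ : IsProbabilityMeasure μ) (hν : IsProbabilityMeasure ν)
    (hW : wassersteinDist sphAngle p μ ν = Real.pi) :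
    ∃ x : Sph n, μ = Measure.dirac x ∧ ν = Measure.dirac (-x) := by
  haveI := hμ; haveI := hν
  have hp0 : (0 : ℝ) ≤ p := by linarith
  have hp0' : p ≠ 0 := by linarith
  rw [wassersteinDist_eq] at hW
  have h0 : 0 ≤ sInf (cplSet p μ ν) := sInf_cplSet_nonneg hμ hν
  have hEq : sInf (cplSet p μ ν) = Real.pi ^ p := by
    have h1 : (sInf (cplSet p μ ν) ^ (1 / p)) ^ p = sInf (cplSet p μ ν) := by
      rw [← Real.rpow_mul h0, one_div_mul_cancel hp0', Real.rpow_one]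
    rw [← h1, hW]
  set r₀ := ∫ q, sphAngle q.1 q.2 ^ p ∂(μ.prod ν) with hr₀
  have hm : r₀ ∈ cplSet p μ ν := cplSet_prod_mem hμ hν
  have hr₀eq : r₀ = Real.pi ^ p :=
    le_antisymm (cplSet_le hp0 hm)
      (hEq ▸ csInf_le ⟨0, fun _ hr => cplSet_nonneg hr⟩ hm)
  have hint := integrable_sphAngle_rpow (n := n) hp0 (μ.prod ν)
  have hzero : ∫ q, (Real.pi ^ p - sphAngle q.1 q.2 ^ p) ∂(μ.prod ν) = 0 := by
    rw [integral_sub (integrable_const _) hint, ← hr₀, hr₀eq]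
    simp
  have hae := (integral_eq_zero_iff_of_nonneg
    (fun q => sub_nonneg.2 (Real.rpow_le_rpow (sphAngle_nonneg _ _) (sphAngle_le_pi _ _) hp0))
    ((integrable_const _).sub hint)).1 hzero
  have haeq : ∀ᵐ q ∂(μ.prod ν), q.2 = -q.1 := by
    filter_upwards [hae] with q hq
    have hfq : sphAngle q.1 q.2 ^ p = Real.pi ^ p := by
      have h2 : Real.pi ^ p - sphAngle q.1 q.2 ^ p = 0 := hq
      linarith
    have hpi : sphAngle q.1 q.2 = Real.pi := by
      calc sphAngle q.1 q.2 = (sphAngle q.1 q.2 ^ p) ^ (1 / p) := by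
            rw [← Real.rpow_mul (sphAngle_nonneg _ _), mul_one_div_cancel hp0', Real.rpow_one]
        _ = (Real.pi ^ p) ^ (1 / p) := by rw [hfq]
        _ = Real.pi := pi_rpow_inv hp
    exact sphAngle_eq_pi_iff.1 hpi
  set sC : Set (Sph n × Sph n) := {q | q.2 = -q.1} with hsC
  have hsCm : MeasurableSet sC :=
    (isClosed_eq continuous_snd (continuous_neg_sph.comp continuous_fst)).measurableSet
  have hnull : (μ.prod ν) sCᶜ = 0 := by
    rw [ae_iff] at haeq; exact haeq
  have hfub : ∫⁻ x, ν (Prod.mk x ⁻¹' sCᶜ) ∂μ = 0 := by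
    rw [← Measure.prod_apply hsCm.compl, hnull]
  have haex : (fun x => ν (Prod.mk x ⁻¹' sCᶜ)) =ᵐ[μ] 0 :=
    (lintegral_eq_zero_iff (measurable_measure_prodMk_left hsCm.compl)).1 hfub
  haveI : (ae μ).NeBot := ae_neBot.2 hμ.ne_zero
  obtain ⟨x₀, hx₀⟩ := haex.exists
  have hpre : ∀ x : Sph n, Prod.mk x ⁻¹' sCᶜ = {-x}ᶜ := by
    intro x; ext y; simp [hsC]
  have hx₀' : ν ({-x₀}ᶜ) = 0 := by
    rw [← hpre x₀]; exact hx₀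
  have hν_eq : ν = Measure.dirac (-x₀) := eq_dirac_of_compl hx₀'
  have haex2 : ∀ᵐ x ∂μ, x = x₀ := by
    filter_upwards [haex] with x hx
    by_contra hne
    have hmem : -x₀ ∈ ({-x}ᶜ : Set (Sph n)) := by
      simp only [Set.mem_compl_iff, Set.mem_singleton_iff]
      exact fun h => hne ((neg_injective h).symm)
    have hne0 : ν (Prod.mk x ⁻¹' sCᶜ) ≠ 0 := by
      rw [hpre x, hν_eq, Measure.dirac_apply' _ (measurableSet_singleton (-x)).compl]
      simp [Set.indicator_of_mem hmem]
    exact hne0 hx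
  have hμnull : μ ({x₀}ᶜ) = 0 := by
    rw [ae_iff] at haex2; exact haex2
  exact ⟨x₀, eq_dirac_of_compl hμnull, hν_eq⟩

end Aux

/-- The diameter of `W_p(𝕊ⁿ)` is `π`, and this maximal distance is attained
exactly by pairs of Dirac measures at antipodal points. -/
theorem diam_wasserstein_sphere (n : ℕ) {p : ℝ} (hp : 1 ≤ p) :
    (sSup {d : ℝ | ∃ μ ν : Measure (Sph n), IsProbabilityMeasure μ ∧
        IsProbabilityMeasure ν ∧ d = wassersteinDist sphAngle p μ ν} = Real.pi) ∧
    (∀ μ ν : Measure (Sph n), IsProbabilityMeasure μ → IsProbabilityMeasure ν →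
      (wassersteinDist sphAngle p μ ν = Real.pi ↔
        ∃ x : Sph n, μ = Measure.dirac x ∧ ν = Measure.dirac (-x))) := by
  have x₀ : Sph n := ⟨EuclideanSpace.single 0 1, by simp⟩
  constructor
  · apply le_antisymm
    · refine csSup_le ⟨Real.pi, Measure.dirac x₀, Measure.dirac (-x₀), inferInstance,
        inferInstance, (wassersteinDist_dirac hp x₀).symm⟩ ?_
      rintro d ⟨μ, ν, hμ, hν, rfl⟩
      exact wassersteinDist_le_pi hp hμ hν
    · refine le_csSup ⟨Real.pi, ?_⟩ ⟨Measure.dirac x₀, Measure.dirac (-x₀), inferInstance,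
        inferInstance, (wassersteinDist_dirac hp x₀).symm⟩
      rintro d ⟨μ, ν, hμ, hν, rfl⟩
      exact wassersteinDist_le_pi hp hμ hν
  · intro μ ν hμ hν
    constructor
    · exact dirac_of_wasserstein_eq_pi hp hμ hν
    · rintro ⟨x, rfl, rfl⟩
      exact wassersteinDist_dirac hp x
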